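/- Let f be a non-constant entire function of finite order ρ. Then for every z ∈ ℂ and every real s > ρ, the series ∑ m(w) · |w|^{−s}, taken over the nonzero solutions w of f(w) = f(z), converges (is summable), where m(w) denotes the order of vanishing of the entire function w' ↦ f(w') − f(z) at w. In other words, the convergence exponent of every fiber of f does not exceed the order of f. -/

import Mathlib

open Filter

/-- The maximum modulus `M_f(r) = sup_{|w| = r} |f w|`. -/
noncomputable def maxModulus (f : ℂ → ℂ) (r : ℝ) : ℝ :=
  sSup ((fun w => ‖f w‖) '' Metric.sphere (0 : ℂ) r)

/-- The order of an entire function,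
`ρ = limsup_{r → ∞} (log log M_f(r)) / (log r)`, as an extended real number. -/
noncomputable def entireOrder (f : ℂ → ℂ) : EReal :=
  Filter.limsup
    (fun r : ℝ => ((Real.log (Real.log (maxModulus f r)) / Real.log r : ℝ) : EReal))
    Filter.atTop

/-- The order of vanishing of an analytic function `g` at a point `w` (as a natural
number; junk value `0` if `g` is not analytic at `w` or vanishes identically near `w`). -/
noncomputable def vanishingOrder (g : ℂ → ℂ) (w : ℂ) : ℕ :=
  by classical exact if h : AnalyticAt ℂ g w then (analyticOrderAt g w).toNat else 0



lemma vanishingOrder_eq {g : ℂ → ℂ} {w : ℂ} (h : AnalyticAt ℂ g w) :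
    vanishingOrder g w = (analyticOrderAt g w).toNat := by
  simp only [vanishingOrder, dif_pos h]

lemma order_ne_top {g : ℂ → ℂ} (hg : Differentiable ℂ g) {b : ℂ} (hb : g b ≠ 0) (a : ℂ) :
    analyticOrderAt g a ≠ ⊤ := by
  intro h
  rw [analyticOrderAt_eq_top] at h
  have h2 : ∃ᶠ w in nhdsWithin a {a}ᶜ, g w = 0 :=
    (h.filter_mono nhdsWithin_le_nhds).frequently
  have h3 : Set.EqOn g 0 Set.univ :=
    AnalyticOnNhd.eqOn_zero_of_preconnected_of_frequently_eq_zero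
      (fun w _ => hg.analyticAt w) isPreconnected_univ (Set.mem_univ a) h2
  exact hb (h3 (Set.mem_univ b))

lemma order_eq_vanishing {g : ℂ → ℂ} (hg : Differentiable ℂ g) {b : ℂ} (hb : g b ≠ 0) (a : ℂ) :
    analyticOrderAt g a = (vanishingOrder g a : ℕ∞) := by
  rw [vanishingOrder_eq (hg.analyticAt a)]
  exact (ENat.coe_toNat (order_ne_top hg hb a)).symm

lemma zeros_finite {g : ℂ → ℂ} (hg : Differentiable ℂ g) {b : ℂ} (hb : g b ≠ 0) {K : Set ℂ}
    (hK : IsCompact K) : {w | g w = 0 ∧ w ∈ K}.Finite := by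
  by_contra hinf
  have hs : Set.Infinite {w | g w = 0 ∧ w ∈ K} := hinf
  obtain ⟨x, -, hx⟩ := hs.exists_accPt_of_subset_isCompact hK (fun w hw => hw.2)
  rw [accPt_iff_frequently] at hx
  have h2 : ∃ᶠ w in nhdsWithin x {x}ᶜ, g w = 0 := by
    rw [frequently_nhdsWithin_iff]
    exact hx.mono (fun y hy => ⟨hy.2.1, Set.mem_compl_singleton_iff.mpr hy.1⟩)
  have h3 : Set.EqOn g 0 Set.univ :=
    AnalyticOnNhd.eqOn_zero_of_preconnected_of_frequently_eq_zero
      (fun w _ => hg.analyticAt w) isPreconnected_univ (Set.mem_univ x) h2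
  exact hb (h3 (Set.mem_univ b))

lemma divPow {g : ℂ → ℂ} (hg : Differentiable ℂ g) {a : ℂ} {n : ℕ}
    (h : analyticOrderAt g a = (n : ℕ∞)) :
    ∃ h' : ℂ → ℂ, Differentiable ℂ h' ∧ h' a ≠ 0 ∧ ∀ w, g w = (w - a) ^ n * h' w := by
  classical
  obtain ⟨φ, hφ, hφ0, hev⟩ := (hg.analyticAt a).analyticOrderAt_eq_natCast.mp h
  refine ⟨fun w => if w = a then φ a else g w / (w - a) ^ n, ?_, by simp [hφ0], ?_⟩
  · have hEq : (fun w => if w = a then φ a else g w / (w - a) ^ n) =ᶠ[nhds a] φ := by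
      filter_upwards [hev] with w hw
      by_cases hwa : w = a
      · simp [hwa]
      · have hne : (w - a) ^ n ≠ 0 := pow_ne_zero _ (sub_ne_zero.mpr hwa)
        simp only [hwa, if_false, hw, smul_eq_mul]
        field_simp
    intro w
    by_cases hwa : w = a
    · subst hwa
      exact hEq.differentiableAt_iff.mpr hφ.differentiableAt
    · have hne : ∀ᶠ v in nhds w, v ≠ a := eventually_ne_nhds hwa
      have hEq2 : (fun v => if v = a then φ a else g v / (v - a) ^ n) =ᶠ[nhds w]
          (fun v => g v / (v - a) ^ n) := by
        filter_upwards [hne] with v hv; simp [hv]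
      refine hEq2.differentiableAt_iff.mpr ?_
      exact (hg.differentiableAt).div (((differentiable_id.sub_const a).pow n) w)
        (pow_ne_zero _ (sub_ne_zero.mpr hwa))
  · intro w
    by_cases hwa : w = a
    · subst hwa
      have hthis := hev.self_of_nhds
      cases n with
      | zero => simpa using hthis
      | succ n => simp [hthis, sub_self, zero_pow]
    · have hne : (w - a) ^ n ≠ 0 := pow_ne_zero _ (sub_ne_zero.mpr hwa)
      simp only [hwa, if_false]
      field_simp

lemma order_unit_mul {u g1 g2 : ℂ → ℂ} {a : ℂ} (hu : AnalyticAt ℂ u a) (hu0 : u a ≠ 0)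
    (hg1 : AnalyticAt ℂ g1 a) (hg2 : AnalyticAt ℂ g2 a)
    (heq : ∀ w, g1 w = u w * g2 w) {n : ℕ} (h : analyticOrderAt g1 a = (n : ℕ∞)) :
    analyticOrderAt g2 a = (n : ℕ∞) := by
  obtain ⟨φ, hφ, hφ0, hev⟩ := hg1.analyticOrderAt_eq_natCast.mp h
  rw [hg2.analyticOrderAt_eq_natCast]
  refine ⟨fun w => φ w / u w, hφ.div hu hu0, div_ne_zero hφ0 hu0, ?_⟩
  have hune : ∀ᶠ w in nhds a, u w ≠ 0 := hu.continuousAt.eventually_ne hu0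
  filter_upwards [hev, hune] with w hw hwu
  have h2 : u w * g2 w = (w - a) ^ n * φ w := by rw [← heq w, hw, smul_eq_mul]
  rw [smul_eq_mul]
  field_simp
  linear_combination h2

lemma extract_finset {g : ℂ → ℂ} (hg : Differentiable ℂ g) {b : ℂ} (hb : g b ≠ 0)
    (T : Finset ℂ) :
    ∃ h : ℂ → ℂ, Differentiable ℂ h ∧
      ∀ w, g w = (∏ a ∈ T, (w - a) ^ vanishingOrder g a) * h w := by
  classical
  induction T using Finset.induction_on with
  | empty => exact ⟨g, hg, fun w => by simp⟩
  | @insert a T' ha ih =>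
    obtain ⟨h1, hh1, hid1⟩ := ih
    have hudiff : Differentiable ℂ (fun w => ∏ a' ∈ T', (w - a') ^ vanishingOrder g a') := by
      apply Differentiable.fun_finsetProd
      intro a' _
      exact (differentiable_id.sub_const a').pow _
    have hu0 : (fun w => ∏ a' ∈ T', (w - a') ^ vanishingOrder g a') a ≠ 0 := by
      simp only
      rw [Finset.prod_ne_zero_iff]
      intro a' ha'
      exact pow_ne_zero _ (sub_ne_zero.mpr (by rintro rfl; exact ha ha'))
    have hordh1 : analyticOrderAt h1 a = (vanishingOrder g a : ℕ∞) :=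
      order_unit_mul (hudiff.analyticAt a) hu0 (hg.analyticAt a) (hh1.analyticAt a)
        hid1 (order_eq_vanishing hg hb a)
    obtain ⟨h, hh, -, hid⟩ := divPow hh1 hordh1
    refine ⟨h, hh, fun w => ?_⟩
    rw [Finset.prod_insert ha, hid1 w, hid w]; ring

lemma count_le {g : ℂ → ℂ} (hg : Differentiable ℂ g) {b : ℂ} (hb : g b ≠ 0) {r : ℝ}
    (hr : 0 < r) (T : Finset ℂ) (hT : ∀ a ∈ T, a ∈ Metric.closedBall b r) {C : ℝ}
    (hC : ∀ w ∈ Metric.sphere b (3 * r), ‖g w‖ ≤ C) :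
    ‖g b‖ * 2 ^ (∑ a ∈ T, vanishingOrder g a) ≤ C := by
  classical
  obtain ⟨h, hh, hid⟩ := extract_finset hg hb T
  set m := fun a => vanishingOrder g a with hm
  set n := ∑ a ∈ T, m a with hn
  have habs : ∀ w, ‖g w‖
      = (∏ a ∈ T, ‖w - a‖ ^ m a) * ‖h w‖ := by
    intro w
    rw [hid w, norm_mul, norm_prod]
    simp [norm_pow, m]
  have h2r : (0:ℝ) < (2*r)^n := pow_pos (by linarith) n
  have hrn : (0:ℝ) < r^n := pow_pos hr n
  have hstep1 : ∀ w ∈ Metric.sphere b (3*r), ‖h w‖ ≤ C / (2*r)^n := by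
    intro w hw
    have hprod : (2*r)^n ≤ ∏ a ∈ T, ‖w - a‖ ^ m a := by
      rw [hn, ← Finset.prod_pow_eq_pow_sum]
      refine Finset.prod_le_prod (fun a _ => by positivity) (fun a haT => ?_)
      refine pow_le_pow_left₀ (by linarith) ?_ _
      have h1 : ‖w - b‖ = 3*r := by
        simpa [Complex.dist_eq] using hw
      have h2 : ‖a - b‖ ≤ r := by
        simpa [Complex.dist_eq] using hT a haT
      have h3 := norm_add_le (w - a) (a - b)
      rw [sub_add_sub_cancel] at h3
      linarith
    have hgw := hC w hw
    have h4 : ‖h w‖ * (2*r)^n ≤ C := by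
      calc ‖h w‖ * (2*r)^n
          ≤ ‖h w‖ * ∏ a ∈ T, ‖w - a‖ ^ m a :=
            mul_le_mul_of_nonneg_left hprod (norm_nonneg _)
        _ = ‖g w‖ := by rw [habs w]; ring
        _ ≤ C := hgw
    rw [le_div_iff₀ h2r]
    exact h4
  have hb3 : ‖h b‖ ≤ C / (2*r)^n := by
    refine Complex.norm_le_of_forall_mem_frontier_norm_le
      (Metric.isBounded_ball (x := b) (r := 3*r)) hh.diffContOnCl ?_ ?_
    · rw [frontier_ball b (by positivity : (3:ℝ)*r ≠ 0)]
      exact hstep1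
    · rw [closure_ball b (by positivity : (3:ℝ)*r ≠ 0)]
      exact Metric.mem_closedBall_self (by positivity)
  have hprodb : ∏ a ∈ T, ‖b - a‖ ^ m a ≤ r ^ n := by
    rw [hn, ← Finset.prod_pow_eq_pow_sum]
    refine Finset.prod_le_prod (fun a _ => by positivity) (fun a haT => ?_)
    refine pow_le_pow_left₀ (norm_nonneg _) ?_ _
    have h5 : dist a b ≤ r := Metric.mem_closedBall.mp (hT a haT)
    rw [Complex.dist_eq] at h5
    rw [norm_sub_rev]
    exact h5
  have hgb : ‖g b‖ ≤ r^n * (C / (2*r)^n) := by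
    rw [habs b]
    refine mul_le_mul hprodb ?_ (norm_nonneg _) (le_of_lt hrn)
    exact hb3
  have heq : r^n * (C/(2*r)^n) = C / 2^n := by
    rw [mul_pow]
    field_simp
  rw [heq] at hgb
  rw [hn] at hgb ⊢
  exact (le_div_iff₀ (by positivity : (0:ℝ) < 2^(∑ a ∈ T, m a))).mp hgb

lemma abs_le_maxModulus {f : ℂ → ℂ} (hf : Differentiable ℂ f) {R : ℝ} (hR : 0 < R) {w : ℂ}
    (hw : ‖w‖ ≤ R) : ‖f w‖ ≤ maxModulus f R := by
  have hbdd : BddAbove ((fun w => ‖f w‖) '' Metric.sphere (0:ℂ) R) :=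
    ((isCompact_sphere (0:ℂ) R).image_of_continuousOn
      ((continuous_norm.comp hf.continuous).continuousOn)).bddAbove
  refine Complex.norm_le_of_forall_mem_frontier_norm_le
    (Metric.isBounded_ball (x := (0:ℂ)) (r := R)) hf.diffContOnCl ?_ ?_
  · rw [frontier_ball (0:ℂ) (ne_of_gt hR)]
    intro x hx
    exact le_csSup hbdd ⟨x, hx, rfl⟩
  · rw [closure_ball (0:ℂ) (ne_of_gt hR)]
    rw [Metric.mem_closedBall, Complex.dist_eq, sub_zero]
    exact hw

open scoped Classical in
/-- For a non-constant entire function `f` of finite order `ρ`, the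
convergence exponent of every fiber of `f` is at most `ρ`: for every `z` and every
`s > ρ`, the series `∑ m(w)·|w|^{-s}` over the nonzero solutions of `f(w) = f(z)`
(with multiplicities `m(w)`) converges. -/
theorem fiber_convergence_exponent_le_order (f : ℂ → ℂ) (hf : Differentiable ℂ f)
    (hnc : ¬∃ c : ℂ, ∀ w : ℂ, f w = c) (ρ : ℝ) (hord : entireOrder f = (ρ : EReal)) :
    ∀ z : ℂ, ∀ s : ℝ, ρ < s →
      Summable (fun w : {w : ℂ // f w = f z ∧ w ≠ 0} =>
        (vanishingOrder (fun w' => f w' - f z) (w : ℂ) : ℝ) * ‖(w : ℂ)‖ ^ (-s)) := by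
  intro z s hs
  classical
  set g : ℂ → ℂ := fun w' => f w' - f z with hgdef
  set c := f z with hc
  have hg : Differentiable ℂ g := hf.sub_const _
  obtain ⟨b, hbne⟩ : ∃ b, g b ≠ 0 := by
    push_neg at hnc
    obtain ⟨w, hw⟩ := hnc (f z)
    exact ⟨w, sub_ne_zero.mpr hw⟩
  have hord' : Filter.limsup
      (fun r : ℝ => ((Real.log (Real.log (maxModulus f r)) / Real.log r : ℝ) : EReal))
      Filter.atTop = (ρ : EReal) := hord
  have hgrow : ∀ σ : ℝ, ρ < σ → ∀ᶠ r in atTop,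
      Real.log (Real.log (maxModulus f r)) / Real.log r < σ := by
    intro σ hσ
    have hlt : Filter.limsup
        (fun r : ℝ => ((Real.log (Real.log (maxModulus f r)) / Real.log r : ℝ) : EReal))
        Filter.atTop < (σ : EReal) := by
      rw [hord']; exact_mod_cast hσ
    have hev := eventually_lt_of_limsup_lt hlt
    filter_upwards [hev] with r hr
    exact_mod_cast hr
  rcases le_or_gt s 0 with hs0 | hs0
  · exfalso
    have hρ2 : ρ < (ρ + s)/2 := by linarith
    have hneg : (ρ + s)/2 < 0 := by linarith
    have hMe : ∀ᶠ r in atTop, maxModulus f r ≤ Real.exp 1 := by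
      filter_upwards [hgrow _ hρ2, eventually_gt_atTop (1:ℝ)] with r h1 hr1
      by_contra hMr
      push_neg at hMr
      have hlogr := Real.log_pos hr1
      have h2 : Real.log (Real.log (maxModulus f r)) < (ρ+s)/2 * Real.log r :=
        (div_lt_iff₀ hlogr).mp h1
      have h3 : (1:ℝ) < Real.log (maxModulus f r) := by
        have := Real.log_lt_log (Real.exp_pos 1) hMr
        rwa [Real.log_exp] at this
      have h4 : 0 < Real.log (Real.log (maxModulus f r)) := Real.log_pos h3
      have h5 : (ρ+s)/2 * Real.log r < 0 := mul_neg_of_neg_of_pos hneg hlogr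
      linarith
    obtain ⟨r0, hr0⟩ := eventually_atTop.mp hMe
    have hbd : ∀ w : ℂ, ‖f w‖ ≤ Real.exp 1 := by
      intro w
      set R := max r0 (‖w‖) + 1 with hR
      have hwR : ‖w‖ ≤ R := by
        have := le_max_right r0 (‖w‖); linarith
      have hRpos : 0 < R := by
        have h6 := norm_nonneg w
        have := le_max_right r0 (‖w‖); linarith
      have h7 := abs_le_maxModulus hf hRpos hwR
      refine h7.trans (hr0 R ?_)
      have := le_max_left r0 (‖w‖); linarith
    obtain ⟨c', hc'⟩ := hf.exists_eq_const_of_bounded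
      (isBounded_iff_forall_norm_le.mpr ⟨Real.exp 1, by rintro x ⟨w, rfl⟩; exact hbd w⟩)
    exact hnc ⟨c', fun w => congrFun hc' w⟩
  -- main case : 0 < s
  set s' := max ((ρ + s)/2) (s/2) with hs'def
  have hρs' : ρ < s' := lt_of_lt_of_le (by linarith) (le_max_left _ _)
  have hs'pos : 0 < s' := lt_of_lt_of_le (by linarith) (le_max_right _ _)
  have hs's : s' < s := max_lt (by linarith) (by linarith)
  set t := (s' + s)/2 with htdef
  have hts : t < s := by rw [htdef]; linarith
  have hs't : s' < t := by rw [htdef]; linarith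
  have htpos : 0 < t := by rw [htdef]; linarith
  have hMgrow : ∀ᶠ r in atTop, maxModulus f r ≤ Real.exp (r ^ s') := by
    filter_upwards [hgrow s' hρs', eventually_gt_atTop (1:ℝ)] with r h1 hr1
    by_contra hMr
    push_neg at hMr
    have hr0 : (0:ℝ) < r := by linarith
    have hlogr := Real.log_pos hr1
    have h2 : Real.log (Real.log (maxModulus f r)) < s' * Real.log r := (div_lt_iff₀ hlogr).mp h1
    have h3 : r ^ s' < Real.log (maxModulus f r) := by
      have := Real.log_lt_log (Real.exp_pos _) hMr
      rwa [Real.log_exp] at this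
    have h4 : Real.log (r ^ s') < Real.log (Real.log (maxModulus f r)) :=
      Real.log_lt_log (Real.rpow_pos_of_pos hr0 _) h3
    rw [Real.log_rpow hr0] at h4
    linarith
  obtain ⟨r2, hr2⟩ := eventually_atTop.mp hMgrow
  set Zfin : ℝ → Finset ℂ :=
    fun R => (zeros_finite hg hbne (isCompact_closedBall (0:ℂ) R)).toFinset with hZfin
  have hZmem : ∀ R x, x ∈ Zfin R ↔ g x = 0 ∧ ‖x‖ ≤ R := by
    intro R x
    rw [hZfin]
    simp [Set.Finite.mem_toFinset, Metric.mem_closedBall, Complex.dist_eq]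
  set nn : ℝ → ℕ := fun R => ∑ a ∈ Zfin R, vanishingOrder g a with hnn
  -- counting bound
  have hcount : ∀ᶠ R in atTop,
      ‖g b‖ * 2 ^ (nn R) ≤ 2 * Real.exp ((7*R) ^ s') := by
    have h7R : Tendsto (fun R : ℝ => (7*R) ^ s') atTop atTop :=
      (tendsto_rpow_atTop hs'pos).comp (tendsto_id.const_mul_atTop (by norm_num : (0:ℝ) < 7))
    filter_upwards [eventually_ge_atTop (1:ℝ), eventually_ge_atTop (‖b‖),
      eventually_ge_atTop r2,
      h7R.eventually_ge_atTop (Real.log (‖c‖ + 1))] with R hR1 hRb hRr2 hRc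
    set r := R + ‖b‖ with hrdef
    have habsb := norm_nonneg b
    have hrpos : 0 < r := by rw [hrdef]; linarith
    have hsub : ∀ a ∈ Zfin R, a ∈ Metric.closedBall b r := by
      intro a haZ
      rw [Metric.mem_closedBall, Complex.dist_eq]
      have h8 : ‖a‖ ≤ R := ((hZmem R a).mp haZ).2
      have h9 : ‖a - b‖ ≤ ‖a‖ + ‖b‖ := norm_sub_le a b
      rw [hrdef]; linarith
    have hCb : ∀ w ∈ Metric.sphere b (3*r),
        ‖g w‖ ≤ Real.exp ((7*R) ^ s') + ‖c‖ := by
      intro w hw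
      have hwabs : ‖w‖ ≤ 7*R := by
        have h9 : ‖w - b‖ = 3*r := by simpa [Complex.dist_eq] using hw
        have h10 : ‖w‖ ≤ ‖w - b‖ + ‖b‖ := by
          simpa using norm_add_le (w - b) b
        rw [h9, hrdef] at h10
        linarith
      have h11 : ‖f w‖ ≤ Real.exp ((7*R) ^ s') := by
        have h12 := abs_le_maxModulus hf (show (0:ℝ) < 7*R by linarith) hwabs
        exact h12.trans (hr2 (7*R) (by linarith))
      have h13 : ‖g w‖ ≤ ‖f w‖ + ‖c‖ := by
        have := norm_sub_le (f w) c
        simpa [hgdef, hc] using this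
      linarith
    have h12 := count_le hg hbne hrpos (Zfin R) hsub hCb
    refine h12.trans ?_
    have h13 : ‖c‖ + 1 ≤ Real.exp ((7*R) ^ s') := by
      calc ‖c‖ + 1 = Real.exp (Real.log (‖c‖ + 1)) :=
            (Real.exp_log (by positivity)).symm
        _ ≤ _ := Real.exp_le_exp.mpr hRc
    linarith
  have habspos : 0 < ‖g b‖ := norm_pos_iff.mpr hbne
  have hlog2 : (0:ℝ) < Real.log 2 := Real.log_pos (by norm_num)
  have hnRt : ∀ᶠ R in atTop, (nn R : ℝ) ≤ R ^ t := by
    have hRt : Tendsto (fun R : ℝ => (Real.log 2 / 2) * R ^ t) atTop atTop :=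
      (tendsto_rpow_atTop htpos).const_mul_atTop (by positivity)
    have he1 : ∀ᶠ R in atTop,
        Real.log 2 - Real.log (‖g b‖) ≤ (Real.log 2 / 2) * R ^ t :=
      hRt.eventually_ge_atTop _
    have he2 : ∀ᶠ R in atTop, (7:ℝ) ^ s' * R ^ (s' - t) ≤ Real.log 2 / 2 := by
      have h0' : Tendsto (fun R : ℝ => R ^ (s' - t)) atTop (nhds 0) := by
        have := tendsto_rpow_neg_atTop (by linarith : 0 < t - s')
        simpa [neg_sub] using this
      have h0 : Tendsto (fun R : ℝ => (7:ℝ) ^ s' * R ^ (s' - t)) atTop (nhds 0) := by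
        simpa using h0'.const_mul ((7:ℝ) ^ s')
      have := h0.eventually (gt_mem_nhds (by positivity : (0:ℝ) < Real.log 2 / 2))
      exact this.mono (fun R hR => le_of_lt hR)
    filter_upwards [hcount, he1, he2, eventually_gt_atTop (0:ℝ)] with R hcnt h1 h2 hR0
    have hD : (0:ℝ) < 2 * Real.exp ((7*R) ^ s') := by positivity
    have h3 : (2:ℝ) ^ (nn R) ≤ 2 * Real.exp ((7*R) ^ s') / ‖g b‖ := by
      rw [le_div_iff₀ habspos]
      calc (2:ℝ) ^ nn R * ‖g b‖ = ‖g b‖ * 2 ^ nn R := by ring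
        _ ≤ _ := hcnt
    have h4 : (nn R : ℝ) * Real.log 2
        ≤ Real.log (2 * Real.exp ((7*R) ^ s')) - Real.log (‖g b‖) := by
      have h4' := Real.log_le_log (by positivity : (0:ℝ) < 2 ^ (nn R)) h3
      rwa [Real.log_pow, Real.log_div (ne_of_gt hD) (ne_of_gt habspos)] at h4'
    rw [Real.log_mul (by norm_num) (ne_of_gt (Real.exp_pos _)), Real.log_exp] at h4
    have h5 : (7*R) ^ s' = (7:ℝ) ^ s' * R ^ (s' - t) * R ^ t := by
      rw [Real.mul_rpow (by norm_num) hR0.le, mul_assoc, ← Real.rpow_add hR0]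
      ring_nf
    have h6 : (7*R) ^ s' ≤ (Real.log 2 / 2) * R ^ t := by
      rw [h5]
      exact mul_le_mul_of_nonneg_right h2 (Real.rpow_nonneg hR0.le _)
    have h7 : (nn R : ℝ) * Real.log 2 ≤ R ^ t * Real.log 2 := by linarith
    exact le_of_mul_le_mul_right h7 hlog2
  obtain ⟨r3', hr3'⟩ := eventually_atTop.mp hnRt
  set r3 := max r3' 1 with hr3def
  have hr31 : (1:ℝ) ≤ r3 := le_max_right _ _
  have hr3pos : (0:ℝ) < r3 := by linarith
  have hnR : ∀ R, r3 ≤ R → (nn R : ℝ) ≤ R ^ t :=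
    fun R hR => hr3' R (le_trans (le_max_left _ _) hR)
  set φ : ℂ → ℝ := fun x => (vanishingOrder g x : ℝ) * ‖x‖ ^ (-s) with hφdef
  have hφ0 : ∀ x, 0 ≤ φ x :=
    fun x => mul_nonneg (Nat.cast_nonneg _) (Real.rpow_nonneg (norm_nonneg _) _)
  set G : ℕ → Finset ℂ := fun k =>
    Nat.casesOn k ((Zfin r3).filter (fun x => x ≠ 0))
      (fun j => (Zfin (r3 * 2 ^ ((j:ℝ)+1))).filter
        (fun x => r3 * 2 ^ (j:ℝ) < ‖x‖)) with hGdef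
  set C1 := ∑ x ∈ G 0, φ x with hC1
  set q := (2:ℝ) ^ (t - s) with hqdef
  have hq0 : 0 ≤ q := Real.rpow_nonneg (by norm_num) _
  have hq1 : q < 1 := Real.rpow_lt_one_of_one_lt_of_neg (by norm_num) (by linarith)
  set B0 := r3 ^ (t - s) * (2:ℝ) ^ t with hB0
  have hB0nn : 0 ≤ B0 :=
    mul_nonneg (Real.rpow_nonneg hr3pos.le _) (Real.rpow_nonneg (by norm_num) _)
  have hGsucc : ∀ j : ℕ, ∑ x ∈ G (j+1), φ x ≤ B0 * q ^ j := by
    intro j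
    have hub : (1:ℝ) ≤ (2:ℝ) ^ ((j:ℝ)+1) := Real.one_le_rpow (by norm_num) (by positivity)
    have hRub : r3 ≤ r3 * 2 ^ ((j:ℝ)+1) := le_mul_of_one_le_right hr3pos.le hub
    have hlb0 : (0:ℝ) < r3 * 2 ^ (j:ℝ) := by positivity
    have hstep : ∀ x ∈ G (j+1), φ x ≤ (vanishingOrder g x : ℝ) * (r3 * 2 ^ (j:ℝ)) ^ (-s) := by
      intro x hx
      have hx' := Finset.mem_filter.mp hx
      refine mul_le_mul_of_nonneg_left ?_ (Nat.cast_nonneg _)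
      exact Real.rpow_le_rpow_of_nonpos hlb0 (le_of_lt hx'.2) (by linarith)
    have hsum1 : ∑ x ∈ G (j+1), φ x
        ≤ (∑ x ∈ G (j+1), (vanishingOrder g x : ℝ)) * (r3 * 2 ^ (j:ℝ)) ^ (-s) := by
      rw [Finset.sum_mul]
      exact Finset.sum_le_sum hstep
    have hsum2 : (∑ x ∈ G (j+1), (vanishingOrder g x : ℝ))
        ≤ (nn (r3 * 2 ^ ((j:ℝ)+1)) : ℝ) := by
      rw [hnn]
      push_cast
      exact Finset.sum_le_sum_of_subset_of_nonneg (Finset.filter_subset _ _)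
        (fun _ _ _ => Nat.cast_nonneg _)
    have hsum3 : (nn (r3 * 2 ^ ((j:ℝ)+1)) : ℝ) ≤ (r3 * 2 ^ ((j:ℝ)+1)) ^ t := hnR _ hRub
    have halg : (r3 * 2 ^ ((j:ℝ)+1)) ^ t * (r3 * 2 ^ (j:ℝ)) ^ (-s) = B0 * q ^ j := by
      have h2pos : (0:ℝ) < 2 := by norm_num
      rw [hB0, hqdef, ← Real.rpow_natCast ((2:ℝ) ^ (t-s)) j, ← Real.rpow_mul h2pos.le,
        Real.mul_rpow hr3pos.le (by positivity), Real.mul_rpow hr3pos.le (by positivity),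
        ← Real.rpow_mul h2pos.le, ← Real.rpow_mul h2pos.le,
        mul_mul_mul_comm, ← Real.rpow_add hr3pos, mul_assoc,
        ← Real.rpow_add h2pos, ← Real.rpow_add h2pos]
      congr 2 <;> ring
    calc ∑ x ∈ G (j+1), φ x
        ≤ (∑ x ∈ G (j+1), (vanishingOrder g x : ℝ)) * (r3 * 2 ^ (j:ℝ)) ^ (-s) := hsum1
      _ ≤ (nn (r3 * 2 ^ ((j:ℝ)+1)) : ℝ) * (r3 * 2 ^ (j:ℝ)) ^ (-s) :=
          mul_le_mul_of_nonneg_right hsum2 (Real.rpow_nonneg hlb0.le _)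
      _ ≤ (r3 * 2 ^ ((j:ℝ)+1)) ^ t * (r3 * 2 ^ (j:ℝ)) ^ (-s) :=
          mul_le_mul_of_nonneg_right hsum3 (Real.rpow_nonneg hlb0.le _)
      _ = B0 * q ^ j := halg
  have hcover : ∀ (K : ℕ) (y : ℝ), 0 < y → y ≤ r3 * 2 ^ (K:ℝ) →
      (y ≤ r3) ∨ ∃ j : ℕ, j < K ∧ r3 * 2 ^ (j:ℝ) < y ∧ y ≤ r3 * 2 ^ ((j:ℝ)+1) := by
    intro K
    induction K with
    | zero => intro y hy0 hy; left; simpa using hy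
    | succ K ih =>
      intro y hy0 hy
      by_cases hyK : y ≤ r3 * 2 ^ (K:ℝ)
      · rcases ih y hy0 hyK with h | ⟨j, hj, h1, h2⟩
        · exact Or.inl h
        · exact Or.inr ⟨j, Nat.lt_succ_of_lt hj, h1, h2⟩
      · push_neg at hyK
        refine Or.inr ⟨K, Nat.lt_succ_self K, hyK, ?_⟩
        have hcast : ((K:ℝ)+1) = (((K+1) : ℕ) : ℝ) := by push_cast; ring
        rw [hcast]; exact hy
  set A : ℕ → ℝ := fun k => Nat.casesOn k 0 (fun j => r3 * 2 ^ (j:ℝ)) with hA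
  have hGA : ∀ k x, x ∈ G k → A k < ‖x‖ ∧ ‖x‖ ≤ A (k+1) := by
    intro k x hx
    cases k with
    | zero =>
      have hx' := Finset.mem_filter.mp hx
      refine ⟨norm_pos_iff.mpr hx'.2, ?_⟩
      have := ((hZmem _ _).mp hx'.1).2
      simpa [hA, Real.rpow_natCast] using this
    | succ j =>
      have hx' := Finset.mem_filter.mp hx
      refine ⟨hx'.2, ?_⟩
      have := ((hZmem _ _).mp hx'.1).2
      simp only [hA]
      push_cast
      exact this
  have hAmono : Monotone A := by
    apply monotone_nat_of_le_succ
    intro k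
    cases k with
    | zero =>
      simp only [hA]
      positivity
    | succ j =>
      simp only [hA]
      refine mul_le_mul_of_nonneg_left ?_ hr3pos.le
      refine Real.rpow_le_rpow_of_exponent_le (by norm_num) ?_
      push_cast; linarith
  have hGdisj : ∀ k k', k ≠ k' → Disjoint (G k) (G k') := by
    have key : ∀ k k', k < k' → Disjoint (G k) (G k') := by
      intro k k' hkk
      rw [Finset.disjoint_left]
      intro x hxk hxk'
      have h1 := hGA k x hxk
      have h2 := hGA k' x hxk'
      have h3 : A (k+1) ≤ A k' := hAmono hkk
      linarith
    intro k k' h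
    rcases h.lt_or_gt with h | h
    · exact key _ _ h
    · exact (key _ _ h).symm
  refine summable_of_sum_le (c := C1 + B0 * (1 - q)⁻¹) (fun w => hφ0 _) ?_
  intro u
  set U := u.image (fun w : {w : ℂ // f w = c ∧ w ≠ 0} => (w : ℂ)) with hU
  have hsum_eq : ∑ w ∈ u, ((vanishingOrder g ↑w : ℝ) * ‖(w:ℂ)‖ ^ (-s))
      = ∑ x ∈ U, φ x := by
    rw [hU]
    exact (Finset.sum_image (s := u) (f := φ)
      (g := fun w : {w : ℂ // f w = c ∧ w ≠ 0} => (w:ℂ))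
      (fun x _ y _ h => Subtype.coe_injective h)).symm
  obtain ⟨K, hK⟩ : ∃ K : ℕ, ∀ x ∈ U, ‖x‖ ≤ r3 * 2 ^ (K:ℝ) := by
    obtain ⟨Mx, hMx⟩ := Finset.exists_le (U.image (fun x : ℂ => ‖x‖))
    obtain ⟨K, hK2⟩ := pow_unbounded_of_one_lt (Mx / r3) (by norm_num : (1:ℝ) < 2)
    refine ⟨K, fun x hx => ?_⟩
    have h1 : ‖x‖ ≤ Mx := hMx _ (Finset.mem_image_of_mem _ hx)
    have h2 : Mx < r3 * 2 ^ K := by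
      rw [div_lt_iff₀ hr3pos] at hK2
      linarith [hK2]
    rw [Real.rpow_natCast]
    linarith
  have hUsub : U ⊆ (Finset.range (K+1)).biUnion G := by
    intro x hxU
    rw [hU] at hxU
    obtain ⟨w, hwu, rfl⟩ := Finset.mem_image.mp hxU
    have hgx : g (↑w) = 0 := sub_eq_zero.mpr w.prop.1
    have hxne : (w:ℂ) ≠ 0 := w.prop.2
    have hxpos : 0 < ‖(w:ℂ)‖ := norm_pos_iff.mpr hxne
    rcases hcover K (‖(w:ℂ)‖) hxpos (hK _ hxU) with h | ⟨j, hj, h1, h2⟩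
    · refine Finset.mem_biUnion.mpr ⟨0, Finset.mem_range.mpr (Nat.succ_pos K), ?_⟩
      exact Finset.mem_filter.mpr ⟨(hZmem _ _).mpr ⟨hgx, h⟩, hxne⟩
    · refine Finset.mem_biUnion.mpr ⟨j+1, Finset.mem_range.mpr (by omega), ?_⟩
      exact Finset.mem_filter.mpr ⟨(hZmem _ _).mpr ⟨hgx, h2⟩, h1⟩
  calc ∑ w ∈ u, ((vanishingOrder g ↑w : ℝ) * ‖(w:ℂ)‖ ^ (-s))
      = ∑ x ∈ U, φ x := hsum_eq
    _ ≤ ∑ x ∈ (Finset.range (K+1)).biUnion G, φ x :=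
        Finset.sum_le_sum_of_subset_of_nonneg hUsub (fun x _ _ => hφ0 x)
    _ = ∑ k ∈ Finset.range (K+1), ∑ x ∈ G k, φ x :=
        Finset.sum_biUnion (fun k _ k' _ h => hGdisj k k' h)
    _ = (∑ k ∈ Finset.range K, ∑ x ∈ G (k+1), φ x) + ∑ x ∈ G 0, φ x :=
        Finset.sum_range_succ' _ _
    _ ≤ (∑ k ∈ Finset.range K, B0 * q ^ k) + C1 :=
        add_le_add (Finset.sum_le_sum fun k _ => hGsucc k) le_rfl
    _ ≤ B0 * (1 - q)⁻¹ + C1 := by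
        refine add_le_add_left ?_ C1
        rw [← Finset.mul_sum]
        refine mul_le_mul_of_nonneg_left ?_ hB0nn
        have hsum := Summable.sum_le_tsum (Finset.range K) (fun i _ => pow_nonneg hq0 i)
          (summable_geometric_of_lt_one hq0 hq1)
        rwa [tsum_geometric_of_lt_one hq0 hq1] at hsum
    _ = C1 + B0 * (1 - q)⁻¹ := by ring
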